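/- Let m be a fixed positive integer and suppose that Σ_{n=m}^∞ P(max_{1≤i_1<i_2<⋯<i_m≤n} ∏_{h=1}^m |X_{1,i_h}| ≥ √(n·ln n)) < ∞. Then E(|X_{1,1}|^β) < ∞ for every real number β with 0 ≤ β < 2(m+1). -/

import Mathlib

set_option maxHeartbeats 1000000
set_option linter.unusedVariables false

open MeasureTheory ProbabilityTheory
open scoped ENNReal

/-- The maximum, over all strictly increasing `m`-tuples of indices taken from the first
`n` indices, of the product of the corresponding absolute values `|X i ω|`.
(Indices are zero-based: `X i` plays the role of `X_{1,i+1}`.) -/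
noncomputable def maxProdAbs {Ω : Type*} (X : ℕ → Ω → ℝ) (m n : ℕ) (ω : Ω) : ℝ :=
  sSup ((fun s : Finset ℕ => ∏ i ∈ s, |X i ω|) ''
    {s : Finset ℕ | s.card = m ∧ s ⊆ Finset.range n})

open Finset Filter

lemma le_maxProdAbs {Ω : Type*} (X : ℕ → Ω → ℝ) (m n : ℕ) (ω : Ω) (s : Finset ℕ)
    (h1 : s.card = m) (h2 : s ⊆ Finset.range n) :
    (∏ i ∈ s, |X i ω|) ≤ maxProdAbs X m n ω := by
  apply le_csSup
  · apply Set.Finite.bddAbove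
    apply Set.Finite.image
    have hsub : {s : Finset ℕ | s.card = m ∧ s ⊆ Finset.range n} ⊆
        ↑((Finset.range n).powerset) := by
      intro t ht
      exact Finset.mem_coe.2 (Finset.mem_powerset.2 ht.2)
    exact ((Finset.range n).powerset.finite_toSet).subset hsub
  · exact ⟨s, ⟨h1, h2⟩, rfl⟩

lemma binom_bound {Ω : Type*} [MeasurableSpace Ω] (μ : Measure Ω) [IsProbabilityMeasure μ]
    (X : ℕ → Ω → ℝ) (hmeas : ∀ i, Measurable (X i))
    (hindep : iIndepFun X μ)
    (hident : ∀ i, IdentDistrib (X i) (X 0) μ μ)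
    (m : ℕ) (a : ℝ) (ha : 0 ≤ a) (k n : ℕ) (hkn : k ≤ n) (hmk : m ≤ k)
    (hthr : a ^ m = Real.sqrt (n * Real.log n)) :
    (k.choose m : ℝ≥0∞) * (μ {ω | a ≤ |X 0 ω|})^m * (μ {ω | |X 0 ω| < a})^(k - m)
      ≤ μ {ω | Real.sqrt (n * Real.log n) ≤ maxProdAbs X m n ω} := by
  classical
  set Bhi : Set ℝ := {x | a ≤ |x|} with hBhi
  set Blo : Set ℝ := {x | |x| < a} with hBlo
  have hBhiM : MeasurableSet Bhi := by
    have : Bhi = (fun x : ℝ => |x|) ⁻¹' (Set.Ici a) := rfl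
    rw [this]; exact (measurable_abs) measurableSet_Ici
  have hBloM : MeasurableSet Blo := by
    have : Blo = (fun x : ℝ => |x|) ⁻¹' (Set.Iio a) := rfl
    rw [this]; exact (measurable_abs) measurableSet_Iio
  set B : Finset ℕ → ℕ → Set ℝ := fun s i => if i ∈ s then Bhi else Blo with hB
  have hBM : ∀ s i, MeasurableSet (B s i) := by
    intro s i; by_cases h : i ∈ s <;> simp [hB, h, hBhiM, hBloM]
  set E : Finset ℕ → Set Ω := fun s => ⋂ i ∈ Finset.range k, X i ⁻¹' (B s i) with hE
  -- measure of E s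
  have hmeasE : ∀ s : Finset ℕ, s ∈ Finset.powersetCard m (Finset.range k) →
      μ (E s) = (μ {ω | a ≤ |X 0 ω|})^m * (μ {ω | |X 0 ω| < a})^(k - m) := by
    intro s hs
    rw [Finset.mem_powersetCard] at hs
    have h1 : μ (E s) = ∏ i ∈ Finset.range k, μ (X i ⁻¹' (B s i)) := by
      apply hindep.meas_biInter
      intro i _
      exact ⟨B s i, hBM s i, rfl⟩
    have h2 : ∀ i, μ (X i ⁻¹' (B s i)) = μ (X 0 ⁻¹' (B s i)) := fun i =>
      (hident i).measure_mem_eq (hBM s i)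
    rw [h1]
    calc ∏ i ∈ Finset.range k, μ (X i ⁻¹' (B s i))
        = ∏ i ∈ Finset.range k, (if i ∈ s then μ (X 0 ⁻¹' Bhi) else μ (X 0 ⁻¹' Blo)) := by
          apply Finset.prod_congr rfl
          intro i _
          rw [h2 i]
          by_cases h : i ∈ s <;> simp [hB, h]
      _ = (μ (X 0 ⁻¹' Bhi))^m * (μ (X 0 ⁻¹' Blo))^(k-m) := by
          rw [Finset.prod_ite]
          rw [Finset.prod_const, Finset.prod_const]
          congr 2
          · rw [Finset.filter_mem_eq_inter, Finset.inter_eq_right.2 hs.1, hs.2]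
          · have : Finset.filter (fun i => i ∉ s) (Finset.range k) = Finset.range k \ s := by
              ext i; simp [Finset.mem_sdiff, and_comm]
            rw [this, Finset.card_sdiff_of_subset hs.1, Finset.card_range, hs.2]
      _ = (μ {ω | a ≤ |X 0 ω|})^m * (μ {ω | |X 0 ω| < a})^(k - m) := rfl
  -- disjoint
  have hdisj : Set.PairwiseDisjoint ↑(Finset.powersetCard m (Finset.range k)) E := by
    intro s hs t ht hst
    rw [Finset.mem_coe, Finset.mem_powersetCard] at hs ht
    rw [Function.onFun, Set.disjoint_left]
    intro ω hωs hωt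
    have hcard : ¬ s ⊆ t := by
      intro hsub
      exact hst (Finset.eq_of_subset_of_card_le hsub (by rw [hs.2, ht.2]))
    obtain ⟨i, his, hit⟩ := Finset.not_subset.1 hcard
    have hik : i ∈ Finset.range k := hs.1 his
    have h1 : ω ∈ X i ⁻¹' (B s i) := by
      simp only [hE, Set.mem_iInter] at hωs
      exact hωs i hik
    have h2 : ω ∈ X i ⁻¹' (B t i) := by
      simp only [hE, Set.mem_iInter] at hωt
      exact hωt i hik
    rw [hB] at h1 h2
    simp only [his, if_pos, hit, if_neg, not_false_iff] at h1 h2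
    exact absurd (show a ≤ |X i ω| from h1) (not_le.2 (show |X i ω| < a from h2))
  -- each E s ⊆ target
  have hsub : ∀ s : Finset ℕ, s ∈ Finset.powersetCard m (Finset.range k) →
      E s ⊆ {ω | Real.sqrt (n * Real.log n) ≤ maxProdAbs X m n ω} := by
    intro s hs ω hω
    rw [Finset.mem_powersetCard] at hs
    simp only [hE, Set.mem_iInter] at hω
    have hprod : a ^ m ≤ ∏ i ∈ s, |X i ω| := by
      have : ∀ i ∈ s, a ≤ |X i ω| := by
        intro i his
        have := hω i (hs.1 his)
        rw [hB] at this
        simpa [his, hBhi] using this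
      calc a ^ m = ∏ _i ∈ s, a := by rw [Finset.prod_const, hs.2]
        _ ≤ ∏ i ∈ s, |X i ω| := Finset.prod_le_prod (fun _ _ => ha) this
    have : (∏ i ∈ s, |X i ω|) ≤ maxProdAbs X m n ω :=
      le_maxProdAbs X m n ω s hs.2 (hs.1.trans (Finset.range_subset_range.2 hkn))
    exact le_trans (hthr ▸ hprod) this
  -- conclude
  have hEM : ∀ s : Finset ℕ, s ∈ Finset.powersetCard m (Finset.range k) → MeasurableSet (E s) := by
    intro s _
    exact MeasurableSet.biInter (Finset.range k).countable_toSet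
      (fun i _ => (hmeas i) (hBM s i))
  calc (k.choose m : ℝ≥0∞) * (μ {ω | a ≤ |X 0 ω|})^m * (μ {ω | |X 0 ω| < a})^(k - m)
      = ∑ s ∈ Finset.powersetCard m (Finset.range k),
          ((μ {ω | a ≤ |X 0 ω|})^m * (μ {ω | |X 0 ω| < a})^(k - m)) := by
        rw [Finset.sum_const, Finset.card_powersetCard, Finset.card_range, nsmul_eq_mul, mul_assoc]
    _ = ∑ s ∈ Finset.powersetCard m (Finset.range k), μ (E s) := by
        exact (Finset.sum_congr rfl hmeasE).symm
    _ = μ (⋃ s ∈ Finset.powersetCard m (Finset.range k), E s) :=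
        (measure_biUnion_finset hdisj hEM).symm
    _ ≤ μ {ω | Real.sqrt (n * Real.log n) ≤ maxProdAbs X m n ω} := by
        apply measure_mono
        exact Set.iUnion₂_subset hsub

lemma chain_bound (m : ℕ) (hm : 1 ≤ m) (P g : ℕ → ℝ)
    (hP0 : ∀ n, 0 ≤ P n) (hP1 : ∀ n, P n ≤ 1)
    (hbin : ∀ k n, m ≤ k → k ≤ n → (k.choose m : ℝ) * P n ^ m * (1 - P n)^(k-m) ≤ g n)
    (k n : ℕ) (hk2m : 2*m ≤ k) (hkn : k ≤ n) (ht : (k:ℝ) * P n ≤ 1/2) :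
    ((k:ℝ) * P n)^m ≤ 2^(m+1) * m.factorial * g n := by
  set q := P n with hq
  have hq0 : 0 ≤ q := hP0 n
  have hq1 : q ≤ 1 := hP1 n
  have hmk : m ≤ k := le_trans (by omega) hk2m
  -- Bernoulli
  have hbern : (1:ℝ)/2 ≤ (1 - q)^(k-m) := by
    have h1 : 1 + ((k-m : ℕ):ℝ) * (-q) ≤ (1 + (-q))^(k-m) := by
      apply one_add_mul_le_pow
      linarith
    have h2 : ((k-m:ℕ):ℝ) * q ≤ (k:ℝ) * q := by
      apply mul_le_mul_of_nonneg_right _ hq0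
      exact_mod_cast Nat.cast_le.2 (Nat.sub_le k m)
    have h3 : ((k-m:ℕ):ℝ) * q ≤ 1/2 := le_trans h2 ht
    calc (1:ℝ)/2 = 1 - 1/2 := by ring
      _ ≤ 1 - ((k-m:ℕ):ℝ) * q := by linarith
      _ = 1 + ((k-m:ℕ):ℝ) * (-q) := by ring
      _ ≤ (1 + (-q))^(k-m) := h1
      _ = (1 - q)^(k-m) := by ring_nf
  -- choose bound
  have hchoose : ((k:ℝ)/2)^m ≤ (m.factorial : ℝ) * (k.choose m : ℝ) := by
    have h1 : (k + 1 - m)^m ≤ k.descFactorial m := Nat.pow_sub_le_descFactorial k m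
    have h2 : k.descFactorial m = m.factorial * k.choose m := Nat.descFactorial_eq_factorial_mul_choose k m
    have h3 : ((k + 1 - m : ℕ):ℝ)^m ≤ (m.factorial : ℝ) * (k.choose m : ℝ) := by
      rw [← Nat.cast_mul, ← h2]
      exact_mod_cast h1
    refine le_trans (pow_le_pow_left₀ (by positivity) ?_ m) h3
    have : 2*(k+1-m) ≥ k := by omega
    have : (k:ℝ) ≤ 2 * ((k+1-m:ℕ):ℝ) := by exact_mod_cast this
    linarith
  -- combine
  have hmain := hbin k n hmk hkn
  have key : ((k:ℝ)/2)^m * q^m * (1/2) ≤ (m.factorial : ℝ) * g n := by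
    calc ((k:ℝ)/2)^m * q^m * (1/2)
        ≤ ((m.factorial : ℝ) * (k.choose m : ℝ)) * q^m * ((1-q)^(k-m)) := by
          apply mul_le_mul
          · exact mul_le_mul_of_nonneg_right hchoose (by positivity)
          · exact hbern
          · norm_num
          · positivity
      _ = (m.factorial : ℝ) * ((k.choose m : ℝ) * q^m * (1-q)^(k-m)) := by ring
      _ ≤ (m.factorial : ℝ) * g n := by
          apply mul_le_mul_of_nonneg_left hmain (by positivity)
  have expand : ((k:ℝ) * q)^m = ((k:ℝ)/2)^m * q^m * 2^m := by
    rw [div_pow, mul_pow]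
    field_simp
  rw [expand]
  calc ((k:ℝ)/2)^m * q^m * 2^m = (((k:ℝ)/2)^m * q^m * (1/2)) * 2^(m+1) := by ring
    _ ≤ ((m.factorial:ℝ) * g n) * 2^(m+1) := by
        apply mul_le_mul_of_nonneg_right key (by positivity)
    _ = 2^(m+1) * m.factorial * g n := by ring

-- step: eventually n * P n ≤ 1/2
lemma small_np (m : ℕ) (hm : 1 ≤ m) (P g : ℕ → ℝ)
    (hPanti : Antitone P) (hP0 : ∀ n, 0 ≤ P n) (hP1 : ∀ n, P n ≤ 1)
    (hg0 : ∀ n, 0 ≤ g n) (hgsum : Summable (fun k => g (k + m)))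
    (hbin : ∀ k n, m ≤ k → k ≤ n → (k.choose m : ℝ) * P n ^ m * (1 - P n)^(k-m) ≤ g n) :
    ∃ N : ℕ, ∀ n : ℕ, N ≤ n → (n:ℝ) * P n ≤ 1/2 := by
  have hgt : Filter.Tendsto (fun k => g (k + m)) atTop (nhds 0) := hgsum.tendsto_atTop_zero
  set δ : ℝ := 1/(8*(m+1)) with hδ
  have hδ0 : 0 < δ := by positivity
  -- exists n₀ ≥ m with P n₀ < δ
  have hn0 : ∃ n₀, m ≤ n₀ ∧ P n₀ < δ := by
    by_contra h
    push_neg at h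
    have hge : ∀ k, δ^m ≤ g (k + m) := by
      intro k
      have h1 : δ ≤ P (k + m) := h (k+m) (by omega)
      have h2 : δ^m ≤ P (k+m)^m := pow_le_pow_left₀ hδ0.le h1 m
      have h3 := hbin m (k+m) le_rfl (by omega)
      simp only [Nat.choose_self, Nat.cast_one, one_mul, Nat.sub_self, pow_zero, mul_one] at h3
      linarith
    have : δ^m ≤ 0 := ge_of_tendsto hgt (Filter.Eventually.of_forall hge)
    have : (0:ℝ) < δ^m := pow_pos hδ0 m
    linarith
  obtain ⟨n₀, hn₀m, hn₀δ⟩ := hn0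
  set cm : ℝ := ((1:ℝ)/4)^m / (2^(m+1) * m.factorial) with hcm
  have hcm0 : 0 < cm := by positivity
  -- if n ≥ n₀ and n P n > 1/2 then g n ≥ cm
  have hbig : ∀ n, n₀ ≤ n → 1/2 < (n:ℝ) * P n → cm ≤ g n := by
    intro n hn hhalf
    set q := P n with hqdef
    have hq0 : 0 ≤ q := hP0 n
    have hqδ : q < δ := lt_of_le_of_lt (hPanti hn) hn₀δ
    have hqpos : 0 < q := by
      rcases lt_or_eq_of_le hq0 with h | h
      · exact h
      · exfalso; rw [← h] at hhalf; simp at hhalf; linarith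
    set k : ℕ := ⌊1/(2*q)⌋₊ with hk
    have hkle : (k:ℝ) ≤ 1/(2*q) := Nat.floor_le (by positivity)
    have hkub : (k:ℝ) * q ≤ 1/2 := by
      rw [← le_div_iff₀ hqpos]
      convert hkle using 1
      · rfl
      · rw [div_div]
    have hnlb : 1/(2*q) < (n:ℝ) := by
      rw [div_lt_iff₀ (by positivity)]
      calc (1:ℝ) = 2 * (1/2) := by norm_num
        _ < 2 * ((n:ℝ) * q) := by linarith
        _ = (n:ℝ) * (2*q) := by ring
    have hkn : k ≤ n := by
      have : (k:ℝ) ≤ (n:ℝ) := le_trans hkle hnlb.le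
      exact_mod_cast this
    have hk2m : 2*m ≤ k := by
      have h8 : (0:ℝ) < 8*((m:ℝ)+1) := by positivity
      have hq8 : q * (8*((m:ℝ)+1)) < 1 := by
        have h9 := mul_lt_mul_of_pos_right hqδ h8
        rwa [hδ, one_div, inv_mul_cancel₀ (ne_of_gt h8)] at h9
      have h44 : (4*(m:ℝ)+4) ≤ 1/(2*q) := by
        rw [le_div_iff₀ (by positivity)]
        nlinarith
      have : (4*m+4 : ℕ) ≤ k := by
        rw [hk]
        apply Nat.le_floor
        push_cast
        linarith
      omega
    have hklq : 1/4 ≤ (k:ℝ) * q := by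
      have h1 : 1/(2*q) - 1 < k := by
        have := Nat.lt_floor_add_one (1/(2*q))
        push_cast at this ⊢
        linarith
      have h2 : 1/2 - q < (k:ℝ) * q := by
        have := mul_lt_mul_of_pos_right h1 hqpos
        calc 1/2 - q = (1/(2*q) - 1) * q := by field_simp
          _ < (k:ℝ) * q := this
      have hqsmall : q ≤ 1/4 := by
        have hm0 : (0:ℝ) ≤ (m:ℝ) := Nat.cast_nonneg m
        have : δ ≤ 1/4 := by
          rw [hδ, div_le_div_iff₀ (by positivity) (by norm_num)]
          nlinarith
        linarith
      linarith
    have := chain_bound m hm P g hP0 hP1 hbin k n hk2m hkn hkub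
    have h14 : ((1:ℝ)/4)^m ≤ ((k:ℝ)*q)^m := pow_le_pow_left₀ (by norm_num) hklq m
    rw [hcm]
    rw [div_le_iff₀ (by positivity)]
    calc ((1:ℝ)/4)^m ≤ ((k:ℝ)*q)^m := h14
      _ ≤ 2^(m+1) * m.factorial * g n := this
      _ = g n * (2^(m+1) * m.factorial) := by ring
  -- g (k+m) < cm eventually
  have hev : ∀ᶠ k in atTop, g (k+m) < cm := hgt.eventually (gt_mem_nhds hcm0)
  obtain ⟨K, hK⟩ := hev.exists_forall_of_atTop
  refine ⟨K + m + n₀ + 1, fun n hn => ?_⟩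
  by_contra hcon
  push_neg at hcon
  have h1 : cm ≤ g n := hbig n (by omega) hcon
  have h2 : g ((n - m) + m) < cm := hK (n - m) (by omega)
  rw [Nat.sub_add_cancel (by omega)] at h2
  linarith

lemma tail_poly_bound (m : ℕ) (hm : 1 ≤ m) (P g : ℕ → ℝ)
    (hPanti : Antitone P) (hP0 : ∀ n, 0 ≤ P n) (hP1 : ∀ n, P n ≤ 1)
    (hg0 : ∀ n, 0 ≤ g n) (hgsum : Summable (fun k => g (k + m)))
    (hbin : ∀ k n, m ≤ k → k ≤ n → (k.choose m : ℝ) * P n ^ m * (1 - P n)^(k-m) ≤ g n) :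
    ∃ C : ℝ, 0 < C ∧ ∀ n : ℕ, 1 ≤ n → P n ≤ C * (n:ℝ) ^ (-(((m:ℝ)+1)/(m:ℝ))) := by
  obtain ⟨N, hN⟩ := small_np m hm P g hPanti hP0 hP1 hg0 hgsum hbin
  set αr : ℝ := ((m:ℝ)+1)/(m:ℝ) with hαr
  have hm0 : (0:ℝ) < m := by exact_mod_cast hm
  have hαr0 : 0 < αr := by positivity
  have hαr2 : αr ≤ 2 := by
    have hm1 : (1:ℝ) ≤ (m:ℝ) := by exact_mod_cast hm
    rw [hαr, div_le_iff₀ hm0]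
    linarith
  set C₁ : ℝ := 2^(m+1) * m.factorial with hC₁
  have hC₁0 : (0:ℝ) < C₁ := by positivity
  set N₂ : ℕ := max (max N (2*m)) 1 with hN₂
  have hN₂1 : 1 ≤ N₂ := le_max_right _ 1
  -- summable tail with constant
  have hgs' : Summable (fun k => C₁ * g (k + m)) := hgsum.mul_left C₁
  set S : ℝ := ∑' k, C₁ * g (k + m) with hS
  have hS0 : 0 ≤ S := tsum_nonneg (fun k => mul_nonneg hC₁0.le (hg0 _))
  -- step bound for n ≥ N₂
  have hstep : ∀ n : ℕ, N₂ ≤ n → ((n:ℝ) * P n)^m ≤ C₁ * g n := by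
    intro n hn
    have h2m : 2*m ≤ n := le_trans (le_trans (le_max_right N (2*m)) (le_max_left _ 1)) hn
    have hNn : N ≤ n := le_trans (le_trans (le_max_left N (2*m)) (le_max_left _ 1)) hn
    exact chain_bound m hm P g hP0 hP1 hbin n n h2m le_rfl (hN n hNn)
  -- doubling
  have hdbl : ∀ n : ℕ, N₂ ≤ n → (n:ℝ) * ((n:ℝ) * P (2*n))^m ≤ S := by
    intro n hn
    have hmn : m ≤ n := by
      have := le_trans (le_trans (le_max_right N (2*m)) (le_max_left _ 1)) hn
      omega
    have key : ∀ i ∈ Finset.range n, ((n:ℝ) * P (2*n))^m ≤ C₁ * g ((n+1-m+i) + m) := by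
      intro i hi
      rw [Finset.mem_range] at hi
      have hj : (n+1-m+i) + m = n+1+i := by omega
      rw [hj]
      have hj1 : n+1+i ≤ 2*n := by omega
      have hPle : P (2*n) ≤ P (n+1+i) := hPanti hj1
      have hnle : (n:ℝ) ≤ ((n+1+i:ℕ):ℝ) := by exact_mod_cast by omega
      have h1 : (n:ℝ) * P (2*n) ≤ ((n+1+i:ℕ):ℝ) * P (n+1+i) := by
        apply mul_le_mul hnle hPle (hP0 _) (Nat.cast_nonneg _)
      have h2 : ((n:ℝ) * P (2*n))^m ≤ (((n+1+i:ℕ):ℝ) * P (n+1+i))^m :=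
        pow_le_pow_left₀ (mul_nonneg (Nat.cast_nonneg n) (hP0 _)) h1 m
      refine le_trans h2 (hstep (n+1+i) (by omega))
    calc (n:ℝ) * ((n:ℝ) * P (2*n))^m
        = ∑ _i ∈ Finset.range n, ((n:ℝ) * P (2*n))^m := by
          rw [Finset.sum_const, Finset.card_range, nsmul_eq_mul]
      _ ≤ ∑ i ∈ Finset.range n, C₁ * g ((n+1-m+i) + m) := Finset.sum_le_sum key
      _ = ∑ k ∈ Finset.Ico (n+1-m) (n+1-m+n), C₁ * g (k + m) := by
          rw [Finset.sum_Ico_eq_sum_range]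
          simp
      _ ≤ S := Summable.sum_le_tsum _ (fun k _ => mul_nonneg hC₁0.le (hg0 _)) hgs'
  -- extract root
  have hroot : ∀ n : ℕ, N₂ ≤ n → P (2*n) ≤ S ^ ((m:ℝ)⁻¹) * (n:ℝ) ^ (-αr) := by
    intro n hn
    have hn0 : (0:ℝ) < n := by exact_mod_cast lt_of_lt_of_le hN₂1 hn
    have h1 : ((n:ℝ) * P (2*n))^m ≤ S / (n:ℝ) := by
      rw [le_div_iff₀ hn0]
      calc ((n:ℝ) * P (2*n))^m * n = (n:ℝ) * ((n:ℝ) * P (2*n))^m := by ring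
        _ ≤ S := hdbl n hn
    -- P(2n)^m ≤ S / n^{m+1}
    have h2 : P (2*n)^m ≤ S / (n:ℝ)^(m+1) := by
      rw [le_div_iff₀ (by positivity)]
      calc P (2*n)^m * (n:ℝ)^(m+1) = (((n:ℝ) * P (2*n))^m) * (n:ℝ) := by ring
        _ ≤ (S / (n:ℝ)) * (n:ℝ) := mul_le_mul_of_nonneg_right h1 hn0.le
        _ = S := by field_simp
    have h3 : P (2*n) ≤ (S / (n:ℝ)^(m+1)) ^ ((m:ℝ)⁻¹) := by
      have hx : P (2*n) = ((P (2*n))^m) ^ ((m:ℝ)⁻¹) := by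
        rw [← Real.rpow_natCast (P (2*n)) m, ← Real.rpow_mul (hP0 _),
          mul_inv_cancel₀ (ne_of_gt hm0), Real.rpow_one]
      rw [hx]
      exact Real.rpow_le_rpow (pow_nonneg (hP0 _) m) h2 (by positivity)
    refine le_trans h3 ?_
    rw [Real.div_rpow hS0 (by positivity)]
    rw [div_eq_mul_inv]
    apply mul_le_mul_of_nonneg_left _ (Real.rpow_nonneg hS0 _)
    rw [← Real.rpow_natCast (n:ℝ) (m+1), ← Real.rpow_mul hn0.le, Real.rpow_neg hn0.le]
    apply le_of_eq
    congr 1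
    congr 1
    push_cast
    rw [hαr]
    field_simp
  -- final constant
  set J₀ : ℕ := 2*N₂+2 with hJ₀
  set C₂ : ℝ := 9 * S ^ ((m:ℝ)⁻¹) with hC₂
  have hC₂0 : 0 ≤ C₂ := by positivity
  have hlarge : ∀ j : ℕ, J₀ ≤ j → P j ≤ C₂ * (j:ℝ) ^ (-αr) := by
    intro j hj
    set n : ℕ := j / 2 with hn
    have hnN : N₂ ≤ n := by omega
    have h2n : 2*n ≤ j := by omega
    have hj3n : j ≤ 3*n := by omega
    have hn0 : (0:ℝ) < n := by exact_mod_cast lt_of_lt_of_le hN₂1 hnN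
    have hj0 : (0:ℝ) < j := by exact_mod_cast by omega
    have h1 : P j ≤ P (2*n) := hPanti h2n
    have h2 := hroot n hnN
    -- n^{-αr} ≤ 9 j^{-αr}
    have h3 : (n:ℝ) ^ (-αr) ≤ 9 * (j:ℝ) ^ (-αr) := by
      have hjn : (j:ℝ) ≤ 3 * n := by exact_mod_cast hj3n
      have h5 : ((3:ℝ)*n) ^ (-αr) ≤ (j:ℝ) ^ (-αr) :=
        Real.rpow_le_rpow_of_nonpos hj0 hjn (neg_nonpos.2 hαr0.le)
      have h6 : ((3:ℝ)*n)^(-αr) = (3:ℝ)^(-αr) * (n:ℝ)^(-αr) := Real.mul_rpow (by norm_num) hn0.le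
      have h9 : (3:ℝ)^αr ≤ 9 := by
        calc (3:ℝ)^αr ≤ (3:ℝ)^(2:ℝ) := Real.rpow_le_rpow_of_exponent_le (by norm_num) hαr2
          _ = 9 := by
              rw [show (2:ℝ) = ((2:ℕ):ℝ) by norm_num, Real.rpow_natCast]; norm_num
      have h7 : (1:ℝ)/9 ≤ (3:ℝ)^(-αr) := by
        rw [Real.rpow_neg (by norm_num), one_div]
        exact inv_anti₀ (Real.rpow_pos_of_pos (by norm_num) _) h9
      have h8 : 0 ≤ (n:ℝ)^(-αr) := Real.rpow_nonneg hn0.le _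
      calc (n:ℝ)^(-αr) = 9 * ((1/9) * (n:ℝ)^(-αr)) := by ring
        _ ≤ 9 * ((3:ℝ)^(-αr) * (n:ℝ)^(-αr)) := by
            apply mul_le_mul_of_nonneg_left (mul_le_mul_of_nonneg_right h7 h8) (by norm_num)
        _ = 9 * ((3:ℝ)*n)^(-αr) := by rw [h6]
        _ ≤ 9 * (j:ℝ)^(-αr) := by
            apply mul_le_mul_of_nonneg_left h5 (by norm_num)
    calc P j ≤ P (2*n) := h1
      _ ≤ S ^ ((m:ℝ)⁻¹) * (n:ℝ) ^ (-αr) := h2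
      _ ≤ S ^ ((m:ℝ)⁻¹) * (9 * (j:ℝ) ^ (-αr)) := by
          apply mul_le_mul_of_nonneg_left h3 (Real.rpow_nonneg hS0 _)
      _ = C₂ * (j:ℝ) ^ (-αr) := by rw [hC₂]; ring
  -- final constant
  refine ⟨C₂ + (J₀:ℝ)^αr, by positivity, fun n hn => ?_⟩
  have hn0 : (0:ℝ) < n := by exact_mod_cast hn
  have hnneg : 0 ≤ (n:ℝ)^(-αr) := Real.rpow_nonneg hn0.le _
  by_cases hcase : J₀ ≤ n
  · calc P n ≤ C₂ * (n:ℝ)^(-αr) := hlarge n hcase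
      _ ≤ (C₂ + (J₀:ℝ)^αr) * (n:ℝ)^(-αr) := by
          apply mul_le_mul_of_nonneg_right _ hnneg
          have : (0:ℝ) ≤ (J₀:ℝ)^αr := Real.rpow_nonneg (by positivity) _
          linarith
  · push_neg at hcase
    have hJ0pos : (0:ℝ) < J₀ := by positivity
    have hnJ : (n:ℝ) ≤ (J₀:ℝ) := by exact_mod_cast hcase.le
    have h1 : (J₀:ℝ)^(-αr) ≤ (n:ℝ)^(-αr) :=
      Real.rpow_le_rpow_of_nonpos hn0 hnJ (neg_nonpos.2 hαr0.le)
    have h2 : (1:ℝ) ≤ (J₀:ℝ)^αr * (n:ℝ)^(-αr) := by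
      calc (1:ℝ) = (J₀:ℝ)^αr * (J₀:ℝ)^(-αr) := by
            rw [← Real.rpow_add hJ0pos]; simp
        _ ≤ (J₀:ℝ)^αr * (n:ℝ)^(-αr) := by
            apply mul_le_mul_of_nonneg_left h1 (Real.rpow_nonneg hJ0pos.le _)
    have hC₂n : 0 ≤ C₂ * (n:ℝ)^(-αr) := mul_nonneg hC₂0 hnneg
    calc P n ≤ 1 := hP1 n
      _ ≤ (J₀:ℝ)^αr * (n:ℝ)^(-αr) := h2
      _ ≤ (C₂ + (J₀:ℝ)^αr) * (n:ℝ)^(-αr) := by nlinarith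

lemma lintegral_le_one_add_tsum {Ω : Type*} [MeasurableSpace Ω] (μ : Measure Ω)
    [IsProbabilityMeasure μ] (f : Ω → ℝ) (hf : Measurable f) (hf0 : ∀ ω, 0 ≤ f ω) :
    ∫⁻ ω, ENNReal.ofReal (f ω) ∂μ ≤ 1 + ∑' k : ℕ, μ {ω | ((k:ℝ)+1) ≤ f ω} := by
  have hsm : ∀ k : ℕ, MeasurableSet {ω | ((k:ℝ)+1) ≤ f ω} := fun k =>
    measurableSet_le measurable_const hf
  have hpt : ∀ ω, ENNReal.ofReal (f ω) ≤
      1 + ∑' k : ℕ, Set.indicator {ω' | ((k:ℝ)+1) ≤ f ω'} (fun _ => (1:ℝ≥0∞)) ω := by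
    intro ω
    set N := ⌊f ω⌋₊ with hN
    have h1 : ENNReal.ofReal (f ω) ≤ ((N:ℝ≥0∞) + 1) := by
      have : f ω ≤ (N:ℝ) + 1 := (Nat.lt_floor_add_one (f ω)).le
      calc ENNReal.ofReal (f ω) ≤ ENNReal.ofReal ((N:ℝ)+1) := ENNReal.ofReal_le_ofReal this
        _ = (N:ℝ≥0∞) + 1 := by
            rw [ENNReal.ofReal_add (Nat.cast_nonneg N) zero_le_one]
            simp
    have h2 : (N:ℝ≥0∞) ≤ ∑' k : ℕ,
        Set.indicator {ω' | ((k:ℝ)+1) ≤ f ω'} (fun _ => (1:ℝ≥0∞)) ω := by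
      calc (N:ℝ≥0∞) = ∑ k ∈ Finset.range N, 1 := by simp
        _ = ∑ k ∈ Finset.range N,
            Set.indicator {ω' | ((k:ℝ)+1) ≤ f ω'} (fun _ => (1:ℝ≥0∞)) ω := by
            apply Finset.sum_congr rfl
            intro k hk
            rw [Finset.mem_range] at hk
            rw [Set.indicator_of_mem]
            show ((k:ℝ)+1) ≤ f ω
            have h3 : (k:ℝ)+1 ≤ N := by exact_mod_cast Nat.succ_le_of_lt hk
            exact le_trans h3 (Nat.floor_le (hf0 ω))
        _ ≤ _ := ENNReal.sum_le_tsum _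
    calc ENNReal.ofReal (f ω) ≤ (N:ℝ≥0∞) + 1 := h1
      _ = 1 + (N:ℝ≥0∞) := by ring
      _ ≤ 1 + _ := add_le_add_right h2 1
  calc ∫⁻ ω, ENNReal.ofReal (f ω) ∂μ
      ≤ ∫⁻ ω, (1 + ∑' k : ℕ,
          Set.indicator {ω' | ((k:ℝ)+1) ≤ f ω'} (fun _ => (1:ℝ≥0∞)) ω) ∂μ :=
        lintegral_mono hpt
    _ = ∫⁻ _, (1:ℝ≥0∞) ∂μ + ∫⁻ ω, (∑' k : ℕ,
          Set.indicator {ω' | ((k:ℝ)+1) ≤ f ω'} (fun _ => (1:ℝ≥0∞)) ω) ∂μ := by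
        rw [lintegral_add_left measurable_const]
    _ = 1 + ∑' k : ℕ, μ {ω | ((k:ℝ)+1) ≤ f ω} := by
        rw [lintegral_const, measure_univ, mul_one]
        congr 1
        rw [lintegral_tsum (fun k => ((measurable_const).indicator (hsm k)).aemeasurable)]
        congr 1
        funext k
        have : ({ω | ((k:ℝ)+1) ≤ f ω}.indicator (fun _ => (1:ℝ≥0∞))) =
            ({ω | ((k:ℝ)+1) ≤ f ω}.indicator (1 : Ω → ℝ≥0∞)) := rfl
        rw [this, lintegral_indicator_one (hsm k)]

/-- **Corollary.** For i.i.d. `X_{1,i}` and fixed `m ≥ 1`, if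
`∑_{n≥m} P(max_{1≤i₁<⋯<i_m≤n} ∏_h |X_{1,i_h}| ≥ √(n ln n)) < ∞`, then
`E (|X_{1,1}|^β) < ∞` for every real `β` with `0 ≤ β < 2(m+1)`. -/
theorem stmt_7 {Ω : Type*} [MeasurableSpace Ω] (μ : Measure Ω) [IsProbabilityMeasure μ]
    (X : ℕ → Ω → ℝ) (hmeas : ∀ i, Measurable (X i))
    (hindep : iIndepFun X μ)
    (hident : ∀ i, IdentDistrib (X i) (X 0) μ μ)
    (m : ℕ) (hm : 1 ≤ m)
    (hsum : (∑' k : ℕ, μ {ω |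
      Real.sqrt ((k + m : ℕ) * Real.log (k + m : ℕ)) ≤ maxProdAbs X m (k + m) ω}) < ⊤) :
    ∀ β : ℝ, 0 ≤ β → β < 2 * (m + 1) →
      (∫⁻ ω, ENNReal.ofReal (|X 0 ω| ^ β) ∂μ) < ⊤ := by
  intro β hβ0 hβlt
  have hmne : m ≠ 0 := by omega
  have hm0 : (0:ℝ) < m := by exact_mod_cast hm
  rcases eq_or_lt_of_le hβ0 with hβeq | hβpos
  · simp only [← hβeq, Real.rpow_zero]
    rw [lintegral_const, measure_univ, mul_one, ENNReal.ofReal_one]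
    exact ENNReal.one_lt_top
  -- main case
  set v : ℕ → ℝ := fun n => Real.sqrt (n * Real.log n) with hv
  set a : ℕ → ℝ := fun n => (v n) ^ ((m:ℝ)⁻¹) with ha
  have ha0 : ∀ n, 0 ≤ a n := fun n => Real.rpow_nonneg (Real.sqrt_nonneg _) _
  have ham : ∀ n, (a n)^m = v n := fun n =>
    Real.rpow_inv_natCast_pow (Real.sqrt_nonneg _) hmne
  set P : ℕ → ℝ := fun n => (μ {ω | a n ≤ |X 0 ω|}).toReal with hP
  set g : ℕ → ℝ := fun n => (μ {ω | v n ≤ maxProdAbs X m n ω}).toReal with hg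
  have hsetm : ∀ c : ℝ, MeasurableSet {ω | c ≤ |X 0 ω|} := fun c =>
    measurableSet_le measurable_const (hmeas 0).abs
  have hP0 : ∀ n, 0 ≤ P n := fun n => ENNReal.toReal_nonneg
  have hP1 : ∀ n, P n ≤ 1 := fun n => by
    rw [hP]
    calc (μ {ω | a n ≤ |X 0 ω|}).toReal ≤ (1:ℝ≥0∞).toReal :=
      ENNReal.toReal_mono ENNReal.one_ne_top (prob_le_one)
      _ = 1 := by simp
  have hvmono : Monotone v := by
    intro n n' h
    apply Real.sqrt_le_sqrt
    rcases Nat.eq_zero_or_pos n with rfl | hn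
    · simp only [Nat.cast_zero, zero_mul]
      rcases Nat.eq_zero_or_pos n' with rfl | hn'
      · simp
      · apply mul_nonneg (Nat.cast_nonneg _)
        exact Real.log_natCast_nonneg _
    · apply mul_le_mul (by exact_mod_cast h) _ (Real.log_natCast_nonneg n) (Nat.cast_nonneg _)
      apply Real.log_le_log (by exact_mod_cast hn)
      exact_mod_cast h
  have hamono : Monotone a := by
    intro n n' h
    exact Real.rpow_le_rpow (Real.sqrt_nonneg _) (hvmono h) (by positivity)
  have hPanti : Antitone P := by
    intro n n' h
    apply ENNReal.toReal_mono (measure_ne_top μ _)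
    apply measure_mono
    intro ω hω
    exact le_trans (hamono h) hω
  have hg0 : ∀ n, 0 ≤ g n := fun n => ENNReal.toReal_nonneg
  have hgsum : Summable (fun k => g (k + m)) := by
    apply ENNReal.summable_toReal
    exact ne_of_lt hsum
  have hbin : ∀ k n, m ≤ k → k ≤ n →
      (k.choose m : ℝ) * P n ^ m * (1 - P n)^(k-m) ≤ g n := by
    intro k n hmk hkn
    have hb := binom_bound μ X hmeas hindep hident m (a n) (ha0 n) k n hkn hmk (ham n)
    have hcompl : {ω | |X 0 ω| < a n} = {ω | a n ≤ |X 0 ω|}ᶜ := by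
      ext ω; simp [not_le]
    have hq : μ {ω | |X 0 ω| < a n} = 1 - μ {ω | a n ≤ |X 0 ω|} := by
      rw [hcompl, prob_compl_eq_one_sub (hsetm (a n))]
    have hple : μ {ω | a n ≤ |X 0 ω|} ≤ 1 := prob_le_one
    have htr : (μ {ω | |X 0 ω| < a n}).toReal = 1 - P n := by
      rw [hq, ENNReal.toReal_sub_of_le hple ENNReal.one_ne_top]
      simp [hP]
    have := ENNReal.toReal_mono (measure_ne_top μ _) hb
    rw [ENNReal.toReal_mul, ENNReal.toReal_mul, ENNReal.toReal_pow, ENNReal.toReal_pow,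
      ENNReal.toReal_natCast, htr] at this
    exact this
  obtain ⟨C, hC0, hCb⟩ := tail_poly_bound m hm P g hPanti hP0 hP1 hg0 hgsum hbin
  -- integration part
  set αr : ℝ := ((m:ℝ)+1)/(m:ℝ) with hαr
  have hαr0 : 0 < αr := by positivity
  have hf : Measurable (fun ω => |X 0 ω| ^ β) :=
    ((Real.continuous_rpow_const hβ0).measurable).comp (hmeas 0).abs
  have hf0 : ∀ ω, 0 ≤ |X 0 ω| ^ β := fun ω => Real.rpow_nonneg (abs_nonneg _) _
  have hlayer := lintegral_le_one_add_tsum μ (fun ω => |X 0 ω| ^ β) hf hf0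
  have hfin : (∑' k : ℕ, μ {ω | ((k:ℝ)+1) ≤ |X 0 ω| ^ β}) < ⊤ := by
    set γ : ℝ := ((m:ℝ)/((m:ℝ)+1) + 2*(m:ℝ)/β)/2 with hγ
    have h2mβ : (m:ℝ)/((m:ℝ)+1) < 2*(m:ℝ)/β := by
      rw [div_lt_div_iff₀ (by positivity) hβpos]
      nlinarith
    have hγlb : (m:ℝ)/((m:ℝ)+1) < γ := by rw [hγ]; linarith
    have hγub : γ < 2*(m:ℝ)/β := by rw [hγ]; linarith
    have hγ0 : 0 < γ := lt_trans (by positivity) hγlb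
    set ε : ℝ := (2*(m:ℝ)/β - γ)/2 with hε
    have hε0 : 0 < ε := by rw [hε]; linarith
    have hγε : γ + 2*ε = 2*(m:ℝ)/β := by rw [hε]; ring
    have hγα : 1 < γ * αr := by
      have h1 : (m:ℝ)/((m:ℝ)+1) * αr = 1 := by
        rw [hαr]; field_simp
      calc (1:ℝ) = (m:ℝ)/((m:ℝ)+1) * αr := h1.symm
        _ < γ * αr := mul_lt_mul_of_pos_right hγlb hαr0
    -- eventual facts
    have ht1 : Filter.Tendsto (fun k : ℕ => ((k:ℝ)+2)^γ) Filter.atTop Filter.atTop :=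
      (tendsto_rpow_atTop hγ0).comp
        (Filter.tendsto_atTop_add_const_right _ 2 tendsto_natCast_atTop_atTop)
    have ht2 : Filter.Tendsto (fun k : ℕ => ((k:ℝ)+1)^ε) Filter.atTop Filter.atTop :=
      (tendsto_rpow_atTop hε0).comp
        (Filter.tendsto_atTop_add_const_right _ 1 tendsto_natCast_atTop_atTop)
    obtain ⟨K, hK⟩ := (Filter.eventually_atTop).1
      ((ht1.eventually_ge_atTop 4).and (ht2.eventually_ge_atTop ((γ/ε) * (2:ℝ)^(γ+ε))))
    -- key bound for k ≥ K
    have hkey : ∀ k : ℕ, K ≤ k → μ {ω | ((k:ℝ)+1) ≤ |X 0 ω| ^ β} ≤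
        ENNReal.ofReal (C * 2^αr * ((k:ℝ)+1)^(-(γ*αr))) := by
      intro k hk
      obtain ⟨hF1, hF2⟩ := hK k hk
      set x : ℝ := ((k:ℝ)+2)^γ with hx
      set n : ℕ := ⌊x⌋₊ with hn
      have hk1 : (0:ℝ) < (k:ℝ)+1 := by positivity
      have hk2 : (0:ℝ) < (k:ℝ)+2 := by positivity
      have hx0 : 0 < x := by positivity
      have hnx : (n:ℝ) ≤ x := Nat.floor_le hx0.le
      have hxn : x - 1 < n := by
        have := Nat.lt_floor_add_one x
        linarith
      have hnhalf : x/2 ≤ (n:ℝ) := by linarith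
      have hn2 : (2:ℝ) ≤ (n:ℝ) := by linarith
      have hn1 : 1 ≤ n := by
        have : (1:ℝ) ≤ (n:ℝ) := by linarith
        exact_mod_cast this
      have hn0 : (0:ℝ) < n := by linarith
      set t : ℝ := ((k:ℝ)+1)^(β⁻¹) with htdef
      have ht0 : 0 < t := Real.rpow_pos_of_pos hk1 _
      -- t^m squared
      have htm : (t^m)^2 = ((k:ℝ)+1)^(2*(m:ℝ)/β) := by
        rw [htdef, ← Real.rpow_natCast (((k:ℝ)+1)^(β⁻¹)) m, ← Real.rpow_mul hk1.le,
          ← Real.rpow_natCast (((k:ℝ)+1)^(β⁻¹ * (m:ℕ))) 2, ← Real.rpow_mul hk1.le]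
        congr 1
        push_cast
        field_simp
      -- bound on n log n
      have hlog : (n:ℝ) * Real.log n ≤ ((k:ℝ)+1)^(2*(m:ℝ)/β) := by
        have hlog1 : Real.log n ≤ Real.log x := Real.log_le_log hn0 hnx
        have h1 : (n:ℝ) * Real.log n ≤ x * Real.log x := by
          apply mul_le_mul hnx hlog1 _ hx0.le
          apply Real.log_nonneg
          linarith
        have hlogx : Real.log x = γ * Real.log ((k:ℝ)+2) := Real.log_rpow hk2 _
        have hlogk : Real.log ((k:ℝ)+2) ≤ ((k:ℝ)+2)^ε / ε := by
          have h2 : Real.log (((k:ℝ)+2)^ε) ≤ ((k:ℝ)+2)^ε - 1 :=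
            Real.log_le_sub_one_of_pos (Real.rpow_pos_of_pos hk2 _)
          rw [Real.log_rpow hk2] at h2
          rw [le_div_iff₀ hε0]
          nlinarith
        have h3 : x * Real.log x ≤ (γ/ε) * ((k:ℝ)+2)^(γ+ε) := by
          rw [hlogx]
          calc x * (γ * Real.log ((k:ℝ)+2)) ≤ x * (γ * (((k:ℝ)+2)^ε / ε)) := by
                apply mul_le_mul_of_nonneg_left _ hx0.le
                exact mul_le_mul_of_nonneg_left hlogk hγ0.le
            _ = (γ/ε) * (x * ((k:ℝ)+2)^ε) := by ring
            _ = (γ/ε) * ((k:ℝ)+2)^(γ+ε) := by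
                rw [hx, ← Real.rpow_add hk2]
        have h4 : ((k:ℝ)+2)^(γ+ε) ≤ 2^(γ+ε) * ((k:ℝ)+1)^(γ+ε) := by
          have h5 : (k:ℝ)+2 ≤ 2*((k:ℝ)+1) := by linarith
          calc ((k:ℝ)+2)^(γ+ε) ≤ (2*((k:ℝ)+1))^(γ+ε) :=
                Real.rpow_le_rpow hk2.le h5 (by linarith)
            _ = 2^(γ+ε) * ((k:ℝ)+1)^(γ+ε) := Real.mul_rpow (by norm_num) hk1.le
        have h6 : ((γ/ε) * 2^(γ+ε)) * ((k:ℝ)+1)^(γ+ε) ≤ ((k:ℝ)+1)^ε * ((k:ℝ)+1)^(γ+ε) := by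
          apply mul_le_mul_of_nonneg_right hF2 (Real.rpow_nonneg hk1.le _)
        have h7 : ((k:ℝ)+1)^ε * ((k:ℝ)+1)^(γ+ε) = ((k:ℝ)+1)^(2*(m:ℝ)/β) := by
          rw [← Real.rpow_add hk1, ← hγε]
          ring_nf
        calc (n:ℝ) * Real.log n ≤ x * Real.log x := h1
          _ ≤ (γ/ε) * ((k:ℝ)+2)^(γ+ε) := h3
          _ ≤ (γ/ε) * (2^(γ+ε) * ((k:ℝ)+1)^(γ+ε)) := by
              apply mul_le_mul_of_nonneg_left h4 (by positivity)
          _ = ((γ/ε) * 2^(γ+ε)) * ((k:ℝ)+1)^(γ+ε) := by ring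
          _ ≤ ((k:ℝ)+1)^ε * ((k:ℝ)+1)^(γ+ε) := h6
          _ = ((k:ℝ)+1)^(2*(m:ℝ)/β) := h7
      -- a n ≤ t
      have hat : a n ≤ t := by
        have hvt : v n ≤ t^m := by
          have h8 : Real.sqrt ((n:ℝ) * Real.log n) ≤ Real.sqrt ((t^m)^2) := by
            apply Real.sqrt_le_sqrt
            rw [htm]
            exact hlog
          rw [Real.sqrt_sq (by positivity)] at h8
          exact h8
        calc a n = (v n) ^ ((m:ℝ)⁻¹) := rfl
          _ ≤ (t^m) ^ ((m:ℝ)⁻¹) := Real.rpow_le_rpow (Real.sqrt_nonneg _) hvt (by positivity)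
          _ = t := Real.pow_rpow_inv_natCast ht0.le hmne
      -- set inclusion
      have hincl : {ω | ((k:ℝ)+1) ≤ |X 0 ω| ^ β} ⊆ {ω | a n ≤ |X 0 ω|} := by
        intro ω hω
        have hω' : ((k:ℝ)+1) ≤ |X 0 ω| ^ β := hω
        have h9 : t ≤ (|X 0 ω| ^ β) ^ (β⁻¹) :=
          Real.rpow_le_rpow hk1.le hω' (by positivity)
        rw [← Real.rpow_mul (abs_nonneg _), mul_inv_cancel₀ (ne_of_gt hβpos),
          Real.rpow_one] at h9
        exact le_trans hat h9
      -- tail estimate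
      have hPn : P n ≤ C * 2^αr * ((k:ℝ)+1)^(-(γ*αr)) := by
        have h10 := hCb n hn1
        have h11 : ((k:ℝ)+1)^γ / 2 ≤ (n:ℝ) := by
          have : ((k:ℝ)+1)^γ ≤ x := by
            rw [hx]
            exact Real.rpow_le_rpow hk1.le (by linarith) hγ0.le
          linarith
        have h12 : (n:ℝ)^(-αr) ≤ (((k:ℝ)+1)^γ / 2)^(-αr) :=
          Real.rpow_le_rpow_of_nonpos (by positivity) h11 (neg_nonpos.2 hαr0.le)
        have h13 : (((k:ℝ)+1)^γ / 2)^(-αr) = 2^αr * ((k:ℝ)+1)^(-(γ*αr)) := by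
          rw [Real.div_rpow (Real.rpow_nonneg hk1.le _) (by norm_num),
            ← Real.rpow_mul hk1.le, Real.rpow_neg (by norm_num : (0:ℝ) ≤ 2)]
          rw [show γ * -αr = -(γ*αr) by ring]
          field_simp
        calc P n ≤ C * (n:ℝ)^(-αr) := h10
          _ ≤ C * (((k:ℝ)+1)^γ / 2)^(-αr) := mul_le_mul_of_nonneg_left h12 hC0.le
          _ = C * 2^αr * ((k:ℝ)+1)^(-(γ*αr)) := by rw [h13]; ring
      calc μ {ω | ((k:ℝ)+1) ≤ |X 0 ω| ^ β} ≤ μ {ω | a n ≤ |X 0 ω|} := measure_mono hincl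
        _ = ENNReal.ofReal (P n) := (ENNReal.ofReal_toReal (measure_ne_top μ _)).symm
        _ ≤ ENNReal.ofReal (C * 2^αr * ((k:ℝ)+1)^(-(γ*αr))) := ENNReal.ofReal_le_ofReal hPn
    -- sum up
    have hsummable : Summable (fun k : ℕ => C * 2^αr * ((k:ℝ)+1)^(-(γ*αr))) := by
      apply Summable.mul_left
      have h14 : Summable (fun k : ℕ => ((k:ℝ))^(-(γ*αr))) :=
        Real.summable_nat_rpow.2 (by linarith)
      have h15 := (summable_nat_add_iff 1).2 h14
      apply h15.congr
      intro k
      push_cast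
      ring_nf
    have hbound : ∀ k : ℕ, μ {ω | ((k:ℝ)+1) ≤ |X 0 ω| ^ β} ≤
        (if k < K then (1:ℝ≥0∞) else 0) + ENNReal.ofReal (C * 2^αr * ((k:ℝ)+1)^(-(γ*αr))) := by
      intro k
      by_cases hk : k < K
      · rw [if_pos hk]
        exact le_add_right prob_le_one
      · rw [if_neg hk, zero_add]
        exact hkey k (not_lt.1 hk)
    calc (∑' k : ℕ, μ {ω | ((k:ℝ)+1) ≤ |X 0 ω| ^ β})
        ≤ ∑' k : ℕ, ((if k < K then (1:ℝ≥0∞) else 0) +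
            ENNReal.ofReal (C * 2^αr * ((k:ℝ)+1)^(-(γ*αr)))) := ENNReal.tsum_le_tsum hbound
      _ = (∑' k : ℕ, (if k < K then (1:ℝ≥0∞) else 0)) +
            ∑' k : ℕ, ENNReal.ofReal (C * 2^αr * ((k:ℝ)+1)^(-(γ*αr))) := ENNReal.tsum_add
      _ < ⊤ := by
          rw [ENNReal.add_lt_top]
          constructor
          · have h16 : (∑' k : ℕ, (if k < K then (1:ℝ≥0∞) else 0)) =
                ∑ k ∈ Finset.range K, (if k < K then (1:ℝ≥0∞) else 0) := by
              apply tsum_eq_sum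
              intro k hk
              rw [Finset.mem_range] at hk
              rw [if_neg hk]
            rw [h16]
            apply lt_of_le_of_lt (Finset.sum_le_card_nsmul _ _ 1 (fun k _ => by
              split <;> simp))
            simp only [nsmul_eq_mul, mul_one, Finset.card_range]
            exact ENNReal.natCast_lt_top K
          · rw [← ENNReal.ofReal_tsum_of_nonneg (fun k => ?_) hsummable]
            · exact ENNReal.ofReal_lt_top
            · positivity
  calc (∫⁻ ω, ENNReal.ofReal (|X 0 ω| ^ β) ∂μ)
      ≤ 1 + ∑' k : ℕ, μ {ω | ((k:ℝ)+1) ≤ |X 0 ω| ^ β} := hlayer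
    _ < ⊤ := by
        rw [ENNReal.add_lt_top]
        exact ⟨ENNReal.one_lt_top, hfin⟩
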